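/- Let G be a finite simple graph with edge weights w : E(G) → ℝ and S ⊆ V(G). Let v₁, v₂, …, v_k (k ≥ 3) be distinct vertices forming a path in G (so v_i v_{i+1} ∈ E(G) for 1 ≤ i < k) such that each internal vertex v₂, …, v_{k−1} has degree exactly 2 in G and does not belong to S, and such that v₁ v_k ∉ E(G). Let G' be the weighted graph obtained from G by deleting v₂, …, v_{k−1} (and all edges incident to them) and adding the edge v₁ v_k with weight equal to the maximum of the weights w(v_i v_{i+1}) for 1 ≤ i < k. Then for all u, v ∈ S and every real t: G contains a u–v path all of whose edges have weight less than t if and only if G' contains such a path. -/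

import Mathlib

open scoped Classical

/-- A finite simple graph on a subset of an ambient vertex type `U`. -/
structure FinGraph (U : Type) where
  verts : Finset U
  G : SimpleGraph U
  support : ∀ ⦃u v : U⦄, G.Adj u v → u ∈ verts ∧ v ∈ verts

/-- `G` contains a `u`–`v` path all of whose edges have weight (under `w`) less than `t`. -/
def BottleneckConn {U : Type} (G : SimpleGraph U) (w : Sym2 U → ℝ) (u v : U) (t : ℝ) : Prop :=
  ∃ p : G.Walk u v, p.IsPath ∧ ∀ e ∈ p.edges, w e < t

namespace ContractAux

variable {U : Type}

/-- The subgraph of `G` consisting of edges of weight `< t`. -/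
def restr (G : SimpleGraph U) (w : Sym2 U → ℝ) (t : ℝ) : SimpleGraph U where
  Adj a b := G.Adj a b ∧ w s(a, b) < t
  symm := ⟨fun a b h => ⟨h.1.symm, by rw [Sym2.eq_swap]; exact h.2⟩⟩
  loopless := ⟨fun a h => G.loopless.irrefl a h.1⟩

lemma bconn_iff (G : SimpleGraph U) (w : Sym2 U → ℝ) (u v : U) (t : ℝ) :
    BottleneckConn G w u v t ↔ (restr G w t).Reachable u v := by
  constructor
  · rintro ⟨p, hp, hw⟩
    have hsub : ∀ e ∈ p.edges, e ∈ (restr G w t).edgeSet := by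
      intro e he
      have h1 := p.edges_subset_edgeSet he
      have h2 := hw e he
      revert h1 h2
      refine Sym2.ind (fun a b => ?_) e
      intro h1 h2
      rw [SimpleGraph.mem_edgeSet] at h1 ⊢
      exact ⟨h1, h2⟩
    exact ⟨p.transfer _ hsub⟩
  · rintro ⟨q⟩
    have hp : (q.toPath : (restr G w t).Walk u v).IsPath := q.toPath.2
    set p := (q.toPath : (restr G w t).Walk u v) with hpdef
    have hsub : ∀ e ∈ p.edges, e ∈ G.edgeSet := by
      intro e he
      have h1 := p.edges_subset_edgeSet he
      revert h1
      refine Sym2.ind (fun a b h1 => ?_) e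
      rw [SimpleGraph.mem_edgeSet] at h1 ⊢
      exact h1.1
    refine ⟨p.transfer G hsub, hp.transfer hsub, ?_⟩
    intro e he
    rw [SimpleGraph.Walk.edges_transfer] at he
    have h1 := p.edges_subset_edgeSet he
    revert h1
    refine Sym2.ind (fun a b h1 => ?_) e
    rw [SimpleGraph.mem_edgeSet] at h1
    exact h1.2

lemma reach_map {A B : SimpleGraph U} (f : U → U)
    (h : ∀ a b, A.Adj a b → B.Reachable (f a) (f b)) {x y : U} (hr : A.Reachable x y) :
    B.Reachable (f x) (f y) := by
  obtain ⟨p⟩ := hr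
  induction p with
  | nil => exact .refl _
  | cons ha q ih => exact (h _ _ ha).trans ih

/-- Collapsing map: internal chain vertices go to `v 0` (index `≤ j0`) or `v (k-1)`. -/
noncomputable def phi (v : ℕ → U) (k j0 : ℕ) (a : U) : U :=
  if h : ∃ i, 0 < i ∧ i < k - 1 ∧ a = v i then
    (if h.choose ≤ j0 then v 0 else v (k - 1)) else a

lemma phi_not (v : ℕ → U) (k j0 : ℕ) (a : U)
    (h : ¬ ∃ i, 0 < i ∧ i < k - 1 ∧ a = v i) : phi v k j0 a = a := dif_neg h

lemma phi_int (v : ℕ → U) (k j0 : ℕ)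
    (hinj : ∀ i < k, ∀ j < k, v i = v j → i = j)
    (i : ℕ) (h1 : 0 < i) (h2 : i < k - 1) :
    phi v k j0 (v i) = if i ≤ j0 then v 0 else v (k - 1) := by
  have hInt : ∃ j, 0 < j ∧ j < k - 1 ∧ v i = v j := ⟨i, h1, h2, rfl⟩
  have hc : hInt.choose = i := by
    obtain ⟨c1, c2, c3⟩ := hInt.choose_spec
    exact hinj _ (by omega) _ (by omega) c3.symm
  rw [phi, dif_pos hInt, hc]

end ContractAux

/-- contracting an isolated path `v 0, v 1, …, v (k-1)` (internal vertices of
degree 2 and outside `S`, `v 0` and `v (k-1)` non-adjacent) into a single edge whose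
weight is the maximum weight of the path's edges preserves, for all `u, u' ∈ S` and all
thresholds `t`, the existence of a `u`–`u'` path with all edge weights `< t`. -/
theorem contract_isolated_path_keeps_bottleneck {U : Type} [DecidableEq U]
    (G : FinGraph U) (w : Sym2 U → ℝ) (S : Finset U) (hS : S ⊆ G.verts)
    (k : ℕ) (hk : 3 ≤ k) (v : ℕ → U)
    (hinj : ∀ i < k, ∀ j < k, v i = v j → i = j)
    (hpath : ∀ i, i + 1 < k → G.G.Adj (v i) (v (i + 1)))
    (hdeg : ∀ i, 0 < i → i < k - 1 → (G.G.neighborSet (v i)).ncard = 2)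
    (hnotS : ∀ i, 0 < i → i < k - 1 → v i ∉ S)
    (hnoedge : ¬ G.G.Adj (v 0) (v (k - 1)))
    (G' : FinGraph U) (w' : Sym2 U → ℝ)
    (hG'verts : G'.verts =
      G.verts \ ((Finset.range k).filter fun i => 0 < i ∧ i < k - 1).image v)
    (hG'adj : ∀ a b : U, G'.G.Adj a b ↔
      ((G.G.Adj a b ∧ ∀ i, 0 < i → i < k - 1 → a ≠ v i ∧ b ≠ v i) ∨
        (a = v 0 ∧ b = v (k - 1)) ∨ (a = v (k - 1) ∧ b = v 0)))
    -- the new edge carries the maximum of the weights of the contracted path's edges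
    (hw'new : ∃ j, j + 1 < k ∧ w' s(v 0, v (k - 1)) = w s(v j, v (j + 1)) ∧
      ∀ i, i + 1 < k → w s(v i, v (i + 1)) ≤ w' s(v 0, v (k - 1)))
    -- all other edges keep their weights
    (hw'old : ∀ e ∈ G'.G.edgeSet, e ≠ s(v 0, v (k - 1)) → w' e = w e)
    (u u' : U) (hu : u ∈ S) (hu' : u' ∈ S) (t : ℝ) :
    BottleneckConn G.G w u u' t ↔ BottleneckConn G'.G w' u u' t := by
  classical
  set H : SimpleGraph U := ContractAux.restr G.G w t with hH
  set H' : SimpleGraph U := ContractAux.restr G'.G w' t with hH'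
  -- basic facts
  have hkk : k - 1 < k := by omega
  -- a vertex not being internal
  have hnotint0 : ¬ ∃ i, 0 < i ∧ i < k - 1 ∧ v 0 = v i := by
    rintro ⟨i, h1, h2, h3⟩
    have := hinj 0 (by omega) i (by omega) h3
    omega
  have hnotintk : ¬ ∃ i, 0 < i ∧ i < k - 1 ∧ v (k - 1) = v i := by
    rintro ⟨i, h1, h2, h3⟩
    have := hinj (k - 1) hkk i (by omega) h3
    omega
  have hSnotint : ∀ x ∈ S, ¬ ∃ i, 0 < i ∧ i < k - 1 ∧ x = v i := by
    rintro x hx ⟨i, h1, h2, rfl⟩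
    exact hnotS i h1 h2 hx
  -- any G-neighbour of an internal vertex lies on the chain
  have hnbr : ∀ i, 0 < i → i < k - 1 → ∀ b, G.G.Adj (v i) b →
      b = v (i - 1) ∨ b = v (i + 1) := by
    intro i h1 h2 b hb
    have hfin : (G.G.neighborSet (v i)).Finite :=
      Set.Finite.subset G.verts.finite_toSet (fun x hx => (G.support hx).2)
    have hm1 : v (i - 1) ∈ G.G.neighborSet (v i) := by
      have h := hpath (i - 1) (by omega)
      have h' : i - 1 + 1 = i := by omega
      rw [h'] at h
      exact h.symm
    have hp1 : v (i + 1) ∈ G.G.neighborSet (v i) := hpath i (by omega)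
    have hne : v (i - 1) ≠ v (i + 1) := by
      intro h
      have := hinj (i - 1) (by omega) (i + 1) (by omega) h
      omega
    have hsub : ({v (i - 1), v (i + 1)} : Set U) ⊆ G.G.neighborSet (v i) := by
      rintro x (rfl | rfl)
      · exact hm1
      · exact hp1
    have heq : ({v (i - 1), v (i + 1)} : Set U) = G.G.neighborSet (v i) :=
      Set.eq_of_subset_of_ncard_le hsub
        (by rw [hdeg i h1 h2, Set.ncard_pair hne]) hfin
    have hbmem : b ∈ ({v (i - 1), v (i + 1)} : Set U) := by rw [heq]; exact hb
    simpa using hbmem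
  -- old edges between non-internal vertices survive with the same weight
  have nonint_adj : ∀ a b, H.Adj a b →
      (¬ ∃ i, 0 < i ∧ i < k - 1 ∧ a = v i) →
      (¬ ∃ i, 0 < i ∧ i < k - 1 ∧ b = v i) → H'.Adj a b := by
    rintro a b ⟨hab, hwt⟩ ha hb
    have hne : s(a, b) ≠ s(v 0, v (k - 1)) := by
      intro h
      simp only [Sym2.eq, Sym2.rel_iff', Prod.mk.injEq, Prod.swap_prod_mk] at h
      rcases h with ⟨rfl, rfl⟩ | ⟨rfl, rfl⟩
      · exact hnoedge hab
      · exact hnoedge hab.symm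
    have hadj' : G'.G.Adj a b := (hG'adj a b).2 (Or.inl ⟨hab, fun i h1 h2 =>
      ⟨fun h => ha ⟨i, h1, h2, h⟩, fun h => hb ⟨i, h1, h2, h⟩⟩⟩)
    exact ⟨hadj', by rw [hw'old _ ((G'.G).mem_edgeSet.mpr hadj') hne]; exact hwt⟩
  -- if all chain edges are light, the new edge is in H'
  have newedge : (∀ j, j + 1 < k → w s(v j, v (j + 1)) < t) → H'.Adj (v 0) (v (k - 1)) := by
    intro hall
    obtain ⟨j00, hj1, hj2, _⟩ := hw'new
    exact ⟨(hG'adj _ _).2 (Or.inr (Or.inl ⟨rfl, rfl⟩)), by rw [hj2]; exact hall _ hj1⟩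
  have hbothreach : (∀ j, j + 1 < k → w s(v j, v (j + 1)) < t) →
      ∀ x y : U, (x = v 0 ∨ x = v (k - 1)) → (y = v 0 ∨ y = v (k - 1)) →
      H'.Reachable x y := by
    intro hall x y hx hy
    have hadj := newedge hall
    rcases hx with rfl | rfl <;> rcases hy with rfl | rfl
    · exact .refl _
    · exact hadj.reachable
    · exact hadj.symm.reachable
    · exact .refl _
  -- if all chain edges are light, the chain connects v 0 to v (k-1) in H
  have chainreach : (∀ j, j + 1 < k → w s(v j, v (j + 1)) < t) →
      H.Reachable (v 0) (v (k - 1)) := by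
    intro hall
    have key : ∀ m, m < k → H.Reachable (v 0) (v m) := by
      intro m
      induction m with
      | zero => exact fun _ => .refl _
      | succ n ih =>
        intro h
        exact (ih (by omega)).trans
          (SimpleGraph.Adj.reachable ⟨hpath n h, hall n h⟩)
    exact key (k - 1) hkk
  -- backward direction : every H'-edge yields H-reachability
  have hback : ∀ a b, H'.Adj a b → H.Reachable a b := by
    rintro a b ⟨hab, hwt⟩
    rcases (hG'adj a b).1 hab with ⟨hGab, _⟩ | ⟨rfl, rfl⟩ | ⟨rfl, rfl⟩
    · have hne : s(a, b) ≠ s(v 0, v (k - 1)) := by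
        intro h
        simp only [Sym2.eq, Sym2.rel_iff', Prod.mk.injEq, Prod.swap_prod_mk] at h
        rcases h with ⟨rfl, rfl⟩ | ⟨rfl, rfl⟩
        · exact hnoedge hGab
        · exact hnoedge hGab.symm
      exact SimpleGraph.Adj.reachable
        ⟨hGab, by rwa [hw'old _ ((G'.G).mem_edgeSet.mpr hab) hne] at hwt⟩
    · apply chainreach
      obtain ⟨j00, hj1, hj2, hmax⟩ := hw'new
      exact fun j hj => lt_of_le_of_lt (hmax j hj) hwt
    · refine (chainreach ?_).symm
      obtain ⟨j00, hj1, hj2, hmax⟩ := hw'new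
      have hsw : w' s(v (k - 1), v 0) = w' s(v 0, v (k - 1)) := by rw [Sym2.eq_swap]
      rw [hsw] at hwt
      exact fun j hj => lt_of_le_of_lt (hmax j hj) hwt
  -- forward direction
  have hfwd : ∀ x y, (¬ ∃ i, 0 < i ∧ i < k - 1 ∧ x = v i) →
      (¬ ∃ i, 0 < i ∧ i < k - 1 ∧ y = v i) →
      H.Reachable x y → H'.Reachable x y := by
    intro x y hx hy hr
    obtain ⟨j0, hj0k, hj0⟩ : ∃ j0, j0 + 1 < k ∧
        (w s(v j0, v (j0 + 1)) < t → ∀ j, j + 1 < k → w s(v j, v (j + 1)) < t) := by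
      by_cases hall : ∀ j, j + 1 < k → w s(v j, v (j + 1)) < t
      · exact ⟨0, by omega, fun _ => hall⟩
      · push_neg at hall
        obtain ⟨j, hj1, hj2⟩ := hall
        exact ⟨j, hj1, fun h => absurd h (not_lt.mpr hj2)⟩
    -- value of (ContractAux.phi v k j0) on chain vertices
    have hphiv : ∀ i, i < k → (ContractAux.phi v k j0) (v i) = if i ≤ j0 then v 0 else v (k - 1) := by
      intro i hi
      rcases Nat.eq_zero_or_pos i with rfl | hipos
      · rw [ContractAux.phi_not v k j0 _ hnotint0, if_pos (Nat.zero_le _)]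
      · by_cases hint : i < k - 1
        · exact ContractAux.phi_int v k j0 hinj i hipos hint
        · have hik : i = k - 1 := by omega
          subst hik
          rw [ContractAux.phi_not v k j0 _ hnotintk, if_neg (by omega)]
    -- crossing a light chain edge
    have hedge_step : ∀ m, m + 1 < k → w s(v m, v (m + 1)) < t →
        H'.Reachable ((ContractAux.phi v k j0) (v m)) ((ContractAux.phi v k j0) (v (m + 1))) := by
      intro m hm hwm
      rw [hphiv m (by omega), hphiv (m + 1) hm]
      by_cases hmj : m + 1 ≤ j0
      · rw [if_pos (by omega), if_pos hmj]
      · by_cases hmj2 : m ≤ j0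
        · have hme : m = j0 := by omega
          have hall := hj0 (hme ▸ hwm)
          rw [if_pos hmj2, if_neg hmj]
          exact hbothreach hall _ _ (Or.inl rfl) (Or.inr rfl)
        · rw [if_neg hmj2, if_neg hmj]
    -- edges out of internal vertices
    have hstep_int : ∀ i, 0 < i → i < k - 1 → ∀ b, H.Adj (v i) b →
        H'.Reachable ((ContractAux.phi v k j0) (v i)) ((ContractAux.phi v k j0) b) := by
      rintro i h1 h2 b ⟨hab, hwt⟩
      rcases hnbr i h1 h2 b hab with rfl | rfl
      · obtain ⟨m, rfl⟩ : ∃ m, i = m + 1 := ⟨i - 1, by omega⟩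
        have hms : m + 1 - 1 = m := by omega
        rw [hms]
        have hw' : w s(v m, v (m + 1)) < t := by
          rwa [Sym2.eq_swap] at hwt
        exact (hedge_step m (by omega) hw').symm
      · exact hedge_step i (by omega) hwt
    -- all H-edges map to H'-reachability
    have hstep : ∀ a b, H.Adj a b → H'.Reachable ((ContractAux.phi v k j0) a) ((ContractAux.phi v k j0) b) := by
      intro a b hab
      by_cases ha : ∃ i, 0 < i ∧ i < k - 1 ∧ a = v i
      · obtain ⟨i, h1, h2, rfl⟩ := ha
        exact hstep_int i h1 h2 b hab
      · by_cases hb : ∃ i, 0 < i ∧ i < k - 1 ∧ b = v i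
        · obtain ⟨i, h1, h2, rfl⟩ := hb
          exact (hstep_int i h1 h2 a hab.symm).symm
        · rw [ContractAux.phi_not v k j0 _ ha, ContractAux.phi_not v k j0 _ hb]
          exact (nonint_adj a b hab ha hb).reachable
    have := ContractAux.reach_map (ContractAux.phi v k j0) hstep hr
    rwa [ContractAux.phi_not v k j0 _ hx, ContractAux.phi_not v k j0 _ hy] at this
  rw [ContractAux.bconn_iff, ContractAux.bconn_iff]
  constructor
  · exact hfwd u u' (hSnotint u hu) (hSnotint u' hu')
  · intro hr
    exact ContractAux.reach_map id hback hr
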